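/- For every integer a ≥ 1 and n ≥ 1, the metallic cube Π^a_n contains a Hamiltonian path, i.e., a path visiting every vertex exactly once. -/

import Mathlib

/-- Strings of length `n` over the alphabet `{0,1,…,a}` in which the letter `a`
occurs only immediately after a `0` (i.e. `a` appears only inside blocks `0a`). -/
def MetallicOK (a n : ℕ) (α : Fin n → Fin (a + 1)) : Prop :=
  ∀ i : Fin n, (α i : ℕ) = a →
    ∃ j : Fin n, (j : ℕ) + 1 = (i : ℕ) ∧ (α j : ℕ) = 0

instance (a n : ℕ) : DecidablePred (MetallicOK a n) := fun α => by
  unfold MetallicOK; infer_instance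

/-- Vertices of the metallic cube `Π^a_n`. -/
abbrev MetallicVertex (a n : ℕ) : Type :=
  {α : Fin n → Fin (a + 1) // MetallicOK a n α}

/-- The metallic cube `Π^a_n`: two strings are adjacent iff `Σ_i |α_i - β_i| = 1`. -/
def metallicCube (a n : ℕ) : SimpleGraph (MetallicVertex a n) where
  Adj u v := (∑ i : Fin n, Nat.dist (u.1 i : ℕ) (v.1 i : ℕ)) = 1
  symm := by
    constructor
    intro u v h
    simpa [Nat.dist_comm] using h
  loopless := by
    constructor
    intro u h
    simp [Nat.dist_self] at h

instance (a n : ℕ) : DecidableRel (metallicCube a n).Adj := fun u v =>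
  inferInstanceAs (Decidable ((∑ i : Fin n, Nat.dist (u.1 i : ℕ) (v.1 i : ℕ)) = 1))


namespace MetallicHam

/-! ### Lists model -/

def dsum (u v : List ℕ) : ℕ := (List.zipWith Nat.dist u v).sum

lemma dsum_self (l : List ℕ) : dsum l l = 0 := by
  induction l with
  | nil => rfl
  | cons x t ih =>
    show (List.zipWith Nat.dist (x::t) (x::t)).sum = 0
    rw [List.zipWith_cons_cons]
    simpa [dsum, Nat.dist_self] using ih

lemma dsum_comm (u v : List ℕ) : dsum u v = dsum v u := by
  unfold dsum
  rw [List.zipWith_comm_of_comm Nat.dist_comm]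

lemma dsum_concat {u v : List ℕ} (h : u.length = v.length) (c d : ℕ) :
    dsum (u ++ [c]) (v ++ [d]) = dsum u v + Nat.dist c d := by
  unfold dsum
  rw [List.zipWith_append h]
  simp

def adjL (u v : List ℕ) : Prop := u.length = v.length ∧ dsum u v = 1

lemma adjL_symm {u v : List ℕ} (h : adjL u v) : adjL v u :=
  ⟨h.1.symm, by rw [dsum_comm]; exact h.2⟩

lemma adjL_concat {u v : List ℕ} (c : ℕ) (h : adjL u v) : adjL (u ++ [c]) (v ++ [c]) :=
  ⟨by simp [h.1], by rw [dsum_concat h.1]; simp [Nat.dist_self, h.2]⟩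

lemma append_pair (w : List ℕ) (x y : ℕ) : w ++ [x, y] = (w ++ [x]) ++ [y] := by simp

lemma adjL_concat2 {u v : List ℕ} (x y : ℕ) (h : adjL u v) :
    adjL (u ++ [x, y]) (v ++ [x, y]) := by
  rw [append_pair, append_pair]
  exact adjL_concat y (adjL_concat x h)

lemma adjL_step (u : List ℕ) {c d : ℕ} (h : Nat.dist c d = 1) : adjL (u ++ [c]) (u ++ [d]) :=
  ⟨by simp, by rw [dsum_concat rfl, dsum_self, h]⟩

lemma chain'_map_mem {α β : Type*} {R : α → α → Prop} {S : β → β → Prop} (f : α → β) :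
    ∀ (l : List α), l.Chain' R → (∀ x ∈ l, ∀ y ∈ l, R x y → S (f x) (f y)) →
      (l.map f).Chain' S := by
  intro l
  induction l with
  | nil => intro _ _; exact List.isChain_nil
  | cons x t ih =>
    intro hc hp
    cases t with
    | nil => exact List.isChain_singleton _
    | cons y s =>
      rw [List.map_cons, List.map_cons]
      have hc' := List.isChain_cons_cons.mp hc
      refine List.isChain_cons_cons.mpr ⟨hp x (by simp) y (by simp) hc'.1, ?_⟩
      have := ih hc'.2 (fun u hu v hv h => hp u (by simp [hu]) v (by simp [hv]) h)
      simp at this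
      exact this

lemma chain'_map_concat {c : ℕ} {L : List (List ℕ)} (h : L.Chain' adjL) :
    (L.map (· ++ [c])).Chain' adjL :=
  chain'_map_mem _ L h (fun _ _ _ _ hr => adjL_concat c hr)

lemma chain'_of_reverse {L : List (List ℕ)} (h : L.Chain' adjL) : L.reverse.Chain' adjL := by
  refine List.isChain_reverse.mpr ?_
  exact List.IsChain.imp (fun _ _ hr => adjL_symm hr) h

/-! ### validity predicate -/

def okL (a : ℕ) (l : List ℕ) : Prop :=
  ∀ i (h : i < l.length), l[i] = a → ∃ j, ∃ hj : j < l.length, j + 1 = i ∧ l[j] = 0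

def GoodL (a n : ℕ) (l : List ℕ) : Prop :=
  l.length = n ∧ (∀ x ∈ l, x ≤ a) ∧ okL a l

lemma GoodL_concat_lt {a n : ℕ} {w : List ℕ} {c : ℕ} (hw : GoodL a n w) (hc : c < a) :
    GoodL a (n + 1) (w ++ [c]) := by
  obtain ⟨hl, hb, hok⟩ := hw
  refine ⟨by simp [hl], ?_, ?_⟩
  · intro x hx
    rcases List.mem_append.mp hx with h | h
    · exact hb x h
    · simp at h; omega
  · intro i hi hia
    have hlen : (w ++ [c]).length = w.length + 1 := by simp
    by_cases hiw : i < w.length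
    · have : (w ++ [c])[i] = w[i] := List.getElem_append_left hiw
      rw [this] at hia
      obtain ⟨j, hj, hji, hj0⟩ := hok i hiw hia
      exact ⟨j, by simp; omega, hji, by rw [List.getElem_append_left hj]; exact hj0⟩
    · have hieq : i = w.length := by rw [hlen] at hi; omega
      subst hieq
      have : (w ++ [c])[w.length] = c := List.getElem_concat_length rfl _
      omega

lemma GoodL_concat_0a {a n : ℕ} {w : List ℕ} (ha : 1 ≤ a) (hw : GoodL a n w) :
    GoodL a (n + 2) (w ++ [0, a]) := by
  obtain ⟨hl, hb, hok⟩ := hw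
  refine ⟨by simp [hl], ?_, ?_⟩
  · intro x hx
    rcases List.mem_append.mp hx with h | h
    · exact hb x h
    · simp at h; omega
  · intro i hi hia
    have hlen : (w ++ [0, a]).length = w.length + 2 := by simp
    by_cases hiw : i < w.length
    · rw [List.getElem_append_left hiw] at hia
      obtain ⟨j, hj, hji, hj0⟩ := hok i hiw hia
      refine ⟨j, by simp; omega, hji, ?_⟩
      rw [List.getElem_append_left hj]
      exact hj0
    · by_cases hi0 : i = w.length
      · subst hi0
        rw [List.getElem_append_right (Nat.le_refl _)] at hia
        simp at hia
        omega
      · have hieq : i = w.length + 1 := by omega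
        subst hieq
        refine ⟨w.length, by simp, by omega, ?_⟩
        rw [List.getElem_append_right (Nat.le_refl _)]
        simp

/-! ### the grid -/

def hd (L : List (List ℕ)) : List ℕ := L.headD []
def lt (L : List (List ℕ)) : List ℕ := L.getLastD []

lemma head?_eq_hd {L : List (List ℕ)} (h : L ≠ []) : L.head? = some (hd L) := by
  cases L with
  | nil => exact absurd rfl h
  | cons x t => rfl

lemma getLast?_eq_lt {L : List (List ℕ)} (h : L ≠ []) : L.getLast? = some (lt L) := by
  cases L with
  | nil => exact absurd rfl h
  | cons x t =>
    rw [lt, List.getLastD_eq_getLast?, List.getLast?_eq_getLast h]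
    simp [List.getLast?_eq_getLast h]

lemma hd_mem {L : List (List ℕ)} (h : L ≠ []) : hd L ∈ L := by
  cases L with
  | nil => exact absurd rfl h
  | cons x t => exact List.mem_cons_self

lemma lt_mem {L : List (List ℕ)} (h : L ≠ []) : lt L ∈ L := by
  have := getLast?_eq_lt h
  exact List.mem_of_mem_getLast? (by rw [this]; rfl)

lemma hd_reverse (L : List (List ℕ)) : hd L.reverse = lt L := by
  cases L with
  | nil => rfl
  | cons x t =>
    have h1 : (x :: t) ≠ ([] : List (List ℕ)) := by simp
    have h2 : (x :: t).reverse ≠ ([] : List (List ℕ)) := by simp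
    have := head?_eq_hd h2
    rw [List.head?_reverse, getLast?_eq_lt h1] at this
    exact (Option.some_inj.mp this).symm

lemma lt_reverse (L : List (List ℕ)) : lt L.reverse = hd L := by
  have := hd_reverse L.reverse
  rw [List.reverse_reverse] at this
  exact this.symm

def gridA (C : List (List ℕ)) : ℕ → List (List ℕ)
  | 0 => []
  | k + 1 => gridA C k ++ (if Even k then C else C.reverse).map (· ++ [k])

lemma mem_orient {x : List ℕ} {C : List (List ℕ)} {P : Prop} [Decidable P] :
    x ∈ (if P then C else C.reverse) ↔ x ∈ C := by
  split <;> simp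

lemma mem_gridA {C : List (List ℕ)} {k : ℕ} {l : List ℕ} :
    l ∈ gridA C k ↔ ∃ c, c < k ∧ ∃ w ∈ C, l = w ++ [c] := by
  induction k with
  | zero => simp [gridA]
  | succ k ih =>
    simp only [gridA, List.mem_append, ih, List.mem_map]
    constructor
    · rintro (⟨c, hc, w, hw, rfl⟩ | ⟨w, hw, rfl⟩)
      · exact ⟨c, by omega, w, hw, rfl⟩
      · exact ⟨k, by omega, w, mem_orient.mp hw, rfl⟩
    · rintro ⟨c, hc, w, hw, rfl⟩
      by_cases hck : c < k
      · exact Or.inl ⟨c, hck, w, hw, rfl⟩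
      · have : c = k := by omega
        subst this
        exact Or.inr ⟨w, mem_orient.mpr hw, rfl⟩

lemma head?_gridA {C : List (List ℕ)} (hne : C ≠ []) :
    ∀ {k : ℕ}, 1 ≤ k → (gridA C k).head? = some (hd C ++ [0])
  | 1, _ => by
    show (([] : List (List ℕ)) ++ (if Even 0 then C else C.reverse).map (· ++ [0])).head? = _
    simp only [if_pos (Even.zero), List.nil_append, List.head?_map, head?_eq_hd hne]
    rfl
  | k + 2, _ => by
    show ((gridA C (k+1)) ++ _).head? = _
    rw [List.head?_append, head?_gridA hne (by omega : 1 ≤ k + 1)]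
    rfl

lemma gridA_ne {C : List (List ℕ)} (hne : C ≠ []) {k : ℕ} (hk : 1 ≤ k) :
    gridA C k ≠ [] := by
  intro h
  have := head?_gridA hne hk
  rw [h] at this
  simp at this

lemma getLast?_gridA {C : List (List ℕ)} (hne : C ≠ []) (k : ℕ) :
    (gridA C (k + 1)).getLast? = some ((if Even k then lt C else hd C) ++ [k]) := by
  show ((gridA C k) ++ (if Even k then C else C.reverse).map (· ++ [k])).getLast? = _
  have h2 : (if Even k then C else C.reverse) ≠ [] := by split <;> simp [hne]
  rw [List.getLast?_append, List.getLast?_map, getLast?_eq_lt h2]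
  have : lt (if Even k then C else C.reverse) = if Even k then lt C else hd C := by
    split
    · rfl
    · exact lt_reverse C
  rw [this]
  rfl

lemma nodup_gridA {C : List (List ℕ)} (hnd : C.Nodup) : ∀ k, (gridA C k).Nodup := by
  intro k
  induction k with
  | zero => exact List.nodup_nil
  | succ k ih =>
    refine List.Nodup.append ih ?_ ?_
    · refine List.Nodup.map ?_ ?_
      · intro u v huv
        simpa using huv
      · split
        · exact hnd
        · exact List.nodup_reverse.mpr hnd
    · intro x hx hx2
      obtain ⟨c, hc, w, hw, rfl⟩ := mem_gridA.mp hx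
      obtain ⟨w', hw', heq⟩ := List.mem_map.mp hx2
      have h1 : (w ++ [c]).getLast? = some c := List.getLast?_concat
      rw [← heq] at h1
      rw [List.getLast?_concat] at h1
      simp at h1
      omega

lemma chain'_gridA {C : List (List ℕ)} (hne : C ≠ []) (hch : C.Chain' adjL) :
    ∀ k, (gridA C k).Chain' adjL := by
  intro k
  induction k with
  | zero => exact List.isChain_nil
  | succ k ih =>
    refine List.isChain_append.mpr ⟨ih, ?_, ?_⟩
    · refine chain'_map_concat ?_
      split
      · exact hch
      · exact chain'_of_reverse hch
    · intro x hx y hy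
      cases k with
      | zero => simp [gridA] at hx
      | succ j =>
        rw [getLast?_gridA hne j] at hx
        have h2 : (if Even (j+1) then C else C.reverse) ≠ [] := by split <;> simp [hne]
        rw [List.head?_map, head?_eq_hd h2] at hy
        simp only [Option.mem_def, Option.some_inj, Option.map_some] at hx hy
        subst hx
        subst hy
        have hbase : hd (if Even (j+1) then C else C.reverse)
            = if Even j then lt C else hd C := by
          rcases Nat.even_or_odd j with h | h
          · rw [if_neg (by simp [Nat.even_add_one, h]), if_pos h]
            exact hd_reverse C
          · rw [if_pos (by simp [Nat.even_add_one, Nat.not_even_iff_odd.mpr h]),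
              if_neg (Nat.not_even_iff_odd.mpr h)]
        rw [hbase]
        exact adjL_step _ (by unfold Nat.dist; omega)

/-! ### the Hamiltonian list -/

def orientA (a : ℕ) (L : List (List ℕ)) : List (List ℕ) := if Even a then L else L.reverse

lemma mem_orientA {a : ℕ} {L : List (List ℕ)} {x : List ℕ} : x ∈ orientA a L ↔ x ∈ L := by
  unfold orientA; split <;> simp

lemma orientA_ne {a : ℕ} {L : List (List ℕ)} (h : L ≠ []) : orientA a L ≠ [] := by
  unfold orientA; split
  · exact h
  · simpa using h

lemma nodup_orientA {a : ℕ} {L : List (List ℕ)} (h : L.Nodup) : (orientA a L).Nodup := by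
  unfold orientA; split
  · exact h
  · exact List.nodup_reverse.mpr h

lemma chain'_orientA {a : ℕ} {L : List (List ℕ)} (h : L.Chain' adjL) :
    (orientA a L).Chain' adjL := by
  unfold orientA; split
  · exact h
  · exact chain'_of_reverse h

lemma attach_eq {a : ℕ} (ha : 1 ≤ a) (L : List (List ℕ)) :
    (if Even (a-1) then lt (orientA a L) else hd (orientA a L)) = hd L := by
  have haa : a - 1 + 1 = a := by omega
  rcases Nat.even_or_odd a with h | h
  · have h1 : ¬ Even (a - 1) := by
      intro h2
      rw [← haa] at h
      exact (Nat.even_add_one.mp h) h2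
    rw [if_neg h1]
    unfold orientA
    rw [if_pos h]
  · have h1 : Even (a - 1) := by
      by_contra h2
      rw [← haa] at h
      rw [Nat.odd_add_one] at h
      exact h2 (by simpa using h)
    rw [if_pos h1]
    unfold orientA
    rw [if_neg (Nat.not_even_iff_odd.mpr h)]
    exact lt_reverse L

def Hme (a : ℕ) : ℕ → List (List ℕ)
  | 0 => [[]]
  | 1 => gridA [[]] a
  | n + 2 => gridA (orientA a (Hme a (n+1))) a ++ (orientA a (Hme a n)).map (· ++ [0, a])

def PH (a n : ℕ) : Prop :=
  (Hme a n).Chain' adjL ∧ (Hme a n).Nodup ∧ (∀ l, l ∈ Hme a n ↔ GoodL a n l) ∧ Hme a n ≠ []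

def INVp (a n : ℕ) : Prop :=
  (Hme a (n+1)).head? = some (hd (orientA a (Hme a n)) ++ [0])

lemma getElem_idx_congr {l : List ℕ} {i j : ℕ} (h : i = j) (hi : i < l.length) :
    l[i]'hi = l[j]'(h ▸ hi) := by subst h; rfl

lemma GoodL_dropLast {a m : ℕ} {l : List ℕ} (h : GoodL a (m+1) l) : GoodL a m l.dropLast := by
  obtain ⟨hl, hb, hok⟩ := h
  refine ⟨by simp [hl], ?_, ?_⟩
  · intro x hx
    exact hb x (List.dropLast_subset l hx)
  · intro i hi hia
    have hi' : i < l.length := by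
      have := List.length_dropLast (xs := l)
      omega
    rw [List.getElem_dropLast] at hia
    obtain ⟨j, hj, hji, hj0⟩ := hok i hi' hia
    have hj' : j < l.dropLast.length := by
      have := List.length_dropLast (xs := l)
      omega
    refine ⟨j, hj', hji, ?_⟩
    rw [List.getElem_dropLast]
    exact hj0

lemma GoodL_cases {a n : ℕ} {l : List ℕ} (ha : 1 ≤ a) (h : GoodL a (n+2) l) :
    (∃ c, c < a ∧ ∃ w, GoodL a (n+1) w ∧ l = w ++ [c]) ∨
      (∃ w, GoodL a n w ∧ l = w ++ [0, a]) := by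
  have hl1 : l.length = n + 2 := h.1
  have hne : l ≠ [] := by
    intro hh
    rw [hh] at hl1
    simp at hl1
  have hdec := List.dropLast_append_getLast hne
  have hc_le : l.getLast hne ≤ a := h.2.1 _ (List.getLast_mem hne)
  by_cases hca : l.getLast hne < a
  · exact Or.inl ⟨l.getLast hne, hca, l.dropLast, GoodL_dropLast h, hdec.symm⟩
  · have hc : l.getLast hne = a := by omega
    -- the letter before the last is 0
    have htop : l[n+1]'(by omega) = a := by
      rw [← hc, List.getLast_eq_getElem hne]
      exact (getElem_idx_congr (by omega) _).symm
    obtain ⟨j, hj, hji, hj0⟩ := h.2.2 (n+1) (by omega) htop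
    have hjn : n = j := by omega
    have hj0' : l[n]'(by omega) = 0 := (getElem_idx_congr hjn _).trans hj0
    have e1 : l.dropLast.length = n + 1 := by simp [hl1]
    have hne2 : l.dropLast ≠ [] := by
      intro hh
      rw [hh] at e1
      simp at e1
    have hdec2 := List.dropLast_append_getLast hne2
    have hlast2 : l.dropLast.getLast hne2 = 0 := by
      rw [List.getLast_eq_getElem hne2, List.getElem_dropLast]
      rw [getElem_idx_congr (show l.dropLast.length - 1 = n by omega) _]
      exact hj0'
    refine Or.inr ⟨l.dropLast.dropLast, GoodL_dropLast (GoodL_dropLast h), ?_⟩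
    rw [append_pair, ← hc]
    rw [← hlast2, hdec2, hdec]

lemma PH_zero (a : ℕ) : PH a 0 := by
  refine ⟨List.isChain_singleton _, by simp [Hme], ?_, by simp [Hme]⟩
  intro l
  show l ∈ [[]] ↔ _
  constructor
  · intro hl
    simp at hl
    subst hl
    exact ⟨rfl, by simp, by intro i hi; simp at hi⟩
  · intro hG
    have : l.length = 0 := hG.1
    simp [List.length_eq_zero_iff.mp this]

lemma PH_one {a : ℕ} (ha : 1 ≤ a) : PH a 1 := by
  have hne : ([[]] : List (List ℕ)) ≠ [] := by simp
  have hmem : ∀ l, l ∈ Hme a 1 ↔ GoodL a 1 l := by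
    intro l
    show l ∈ gridA [[]] a ↔ _
    rw [mem_gridA]
    constructor
    · rintro ⟨c, hc, w, hw, rfl⟩
      simp at hw
      subst hw
      refine ⟨by simp, by intro x hx; simp at hx; omega, ?_⟩
      intro i hi hia
      simp at hi
      subst hi
      simp at hia
      omega
    · intro hG
      obtain ⟨x, rfl⟩ := List.length_eq_one_iff.mp hG.1
      have hx_le : x ≤ a := hG.2.1 x (by simp)
      have hx_ne : x ≠ a := by
        intro hh
        obtain ⟨j, hj, hji, _⟩ := hG.2.2 0 (by simp) (by simpa using hh)
        omega
      exact ⟨x, by omega, [], by simp, by simp⟩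
  refine ⟨?_, ?_, hmem, ?_⟩
  · exact chain'_gridA hne (List.isChain_singleton _) a
  · exact nodup_gridA (by simp) a
  · show gridA [[]] a ≠ []
    exact gridA_ne hne ha

lemma INVp_zero {a : ℕ} (ha : 1 ≤ a) : INVp a 0 := by
  show (Hme a 1).head? = some (hd (orientA a (Hme a 0)) ++ [0])
  have h1 : (Hme a 1).head? = some (hd [[]] ++ [0]) := head?_gridA (by simp) ha
  rw [h1]
  have : hd (orientA a (Hme a 0)) = hd [[]] := by
    show hd (orientA a [[]]) = _
    unfold orientA
    split <;> rfl
  rw [this]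

lemma Hme_two_eq (a n : ℕ) :
    Hme a (n+2) = gridA (orientA a (Hme a (n+1))) a ++ (orientA a (Hme a n)).map (· ++ [0, 
a]) := by
  rfl

lemma PH_step {a : ℕ} (ha : 1 ≤ a) (n : ℕ) (h1 : PH a (n+1)) (h0 : PH a n)
    (hinv : INVp a n) : PH a (n+2) ∧ INVp a (n+1) := by
  obtain ⟨h1c, h1n, h1m, h1ne⟩ := h1
  obtain ⟨h0c, h0n, h0m, h0ne⟩ := h0
  set C := orientA a (Hme a (n+1)) with hC
  set D := orientA a (Hme a n) with hD
  have hCne : C ≠ [] := orientA_ne h1ne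
  have hDne : D ≠ [] := orientA_ne h0ne
  have hCch : C.Chain' adjL := chain'_orientA h1c
  have hDch : D.Chain' adjL := chain'_orientA h0c
  have hCnd : C.Nodup := nodup_orientA h1n
  have hDnd : D.Nodup := nodup_orientA h0n
  have haa : a - 1 + 1 = a := by omega
  have hHeq : Hme a (n+2) = gridA C a ++ D.map (· ++ [0, a]) := rfl
  -- head of H (n+1) in terms of D
  have hhd : hd (Hme a (n+1)) = hd D ++ [0] := by
    have := head?_eq_hd h1ne
    rw [hinv] at this
    exact (Option.some_inj.mp this).symm
  -- getLast? of the grid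
  have hGlast : (gridA C a).getLast? = some ((hd D ++ [0]) ++ [a-1]) := by
    have h := getLast?_gridA hCne (a-1)
    rw [haa, hC, attach_eq ha (Hme a (n+1)), hhd, ← hC] at h
    exact h
  -- head? of the copy
  have hKhead : (D.map (· ++ [0, a])).head? = some (hd D ++ [0, a]) := by
    rw [List.head?_map, head?_eq_hd hDne]
    rfl
  have hGne : gridA C a ≠ [] := gridA_ne hCne ha
  constructor
  · refine ⟨?_, ?_, ?_, ?_⟩
    · -- Chain'
      rw [hHeq]
      refine List.isChain_append.mpr ⟨chain'_gridA hCne hCch a, ?_, ?_⟩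
      · exact chain'_map_mem _ D hDch (fun x _ y _ hr => adjL_concat2 0 a hr)
      · intro x hx y hy
        rw [hGlast] at hx
        rw [hKhead] at hy
        simp only [Option.mem_def, Option.some_inj] at hx hy
        subst hx
        subst hy
        rw [append_pair]
        exact adjL_step _ (by unfold Nat.dist; omega)
    · -- Nodup
      rw [hHeq]
      refine List.Nodup.append (nodup_gridA hCnd a) ?_ ?_
      · exact List.Nodup.map (fun u v huv => by simpa using huv) hDnd
      · intro x hx hx2
        obtain ⟨c, hc, w, hw, rfl⟩ := mem_gridA.mp hx
        obtain ⟨w', _, heq⟩ := List.mem_map.mp hx2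
        have h1' : (w ++ [c]).getLast? = some c := List.getLast?_concat
        rw [← heq, append_pair, List.getLast?_concat] at h1'
        simp at h1'
        omega
    · -- membership
      intro l
      rw [hHeq, List.mem_append, mem_gridA, List.mem_map]
      constructor
      · rintro (⟨c, hc, w, hw, rfl⟩ | ⟨w, hw, rfl⟩)
        · exact GoodL_concat_lt ((h1m w).mp (mem_orientA.mp hw)) hc
        · exact GoodL_concat_0a ha ((h0m w).mp (mem_orientA.mp hw))
      · intro hG
        rcases GoodL_cases ha hG with ⟨c, hc, w, hGw, rfl⟩ | ⟨w, hGw, rfl⟩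
        · exact Or.inl ⟨c, hc, w, mem_orientA.mpr ((h1m w).mpr hGw), rfl⟩
        · exact Or.inr ⟨w, mem_orientA.mpr ((h0m w).mpr hGw), rfl⟩
    · -- nonempty
      rw [hHeq]
      intro hh
      rw [List.append_eq_nil_iff] at hh
      exact hGne hh.1
  · -- INVp (n+1)
    show (Hme a (n+2)).head? = some (hd C ++ [0])
    rw [hHeq, List.head?_append, head?_gridA hCne ha]
    rfl

lemma PH_all {a : ℕ} (ha : 1 ≤ a) : ∀ n, PH a n ∧ INVp a n := by
  have key : ∀ n, (PH a n ∧ INVp a n) ∧ (PH a (n+1) ∧ INVp a (n+1)) := by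
    intro n
    induction n with
    | zero =>
      have s0 : PH a 0 ∧ INVp a 0 := ⟨PH_zero a, INVp_zero ha⟩
      have step0 := PH_step ha 0 (PH_one ha) (PH_zero a) (INVp_zero ha)
      exact ⟨s0, PH_one ha, step0.2⟩
    | succ n ih =>
      obtain ⟨⟨hP0, hI0⟩, hP1, hI1⟩ := ih
      have step1 := PH_step ha n hP1 hP0 hI0
      have step2 := PH_step ha (n+1) step1.1 hP1 hI1
      exact ⟨⟨hP1, hI1⟩, step1.1, step2.2⟩
  exact fun n => (key n).1

/-! ### transfer to the graph -/

lemma dsum_eq (n : ℕ) : ∀ (u v : List ℕ) (hu : u.length = n) (hv : v.length = n),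
    dsum u v = ∑ i : Fin n, Nat.dist (u.get (Fin.cast hu.symm i)) (v.get (Fin.cast hv.symm i)) := by
  induction n with
  | zero =>
    intro u v hu hv
    rw [List.length_eq_zero_iff] at hu hv
    subst hu; subst hv
    simp [dsum]
  | succ n ih =>
    intro u v hu hv
    cases u with
    | nil => simp at hu
    | cons x t =>
      cases v with
      | nil => simp at hv
      | cons y s =>
        have ht : t.length = n := by simpa using hu
        have hs : s.length = n := by simpa using hv
        rw [show dsum (x :: t) (y :: s) = Nat.dist x y + dsum t s from by
          show (List.zipWith Nat.dist (x::t) (y::s)).sum = _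
          rw [List.zipWith_cons_cons]
          simp [dsum]]
        rw [Fin.sum_univ_succ]
        congr 1
        rw [ih t s ht hs]
        exact Finset.sum_congr rfl (fun i _ => rfl)

def vtx (a n : ℕ) (l : List ℕ) (h : GoodL a n l) : MetallicVertex a n :=
  ⟨fun i => ⟨l[(i : ℕ)]'(by rw [h.1]; exact i.2), by
      have hle := h.2.1 (l[(i : ℕ)]'(by rw [h.1]; exact i.2)) (List.getElem_mem _)
      omega⟩,
   by
    intro i hi
    obtain ⟨j, hj, hji, hj0⟩ := h.2.2 (i : ℕ) (by rw [h.1]; exact i.2) hi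
    exact ⟨⟨j, by rw [← h.1]; exact hj⟩, hji, hj0⟩⟩

lemma vtx_adj {a n : ℕ} {l l' : List ℕ} (h : GoodL a n l) (h' : GoodL a n l')
    (hadj : adjL l l') : (metallicCube a n).Adj (vtx a n l h) (vtx a n l' h') := by
  show (∑ i : Fin n, Nat.dist ((vtx a n l h).1 i : ℕ) ((vtx a n l' h').1 i : ℕ)) = 1
  have e1 : (∑ i : Fin n, Nat.dist ((vtx a n l h).1 i : ℕ) ((vtx a n l' h').1 i : ℕ))
      = ∑ i : Fin n, Nat.dist (l.get (Fin.cast h.1.symm i)) (l'.get (Fin.cast h'.1.symm i)) :=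
    Finset.sum_congr rfl (fun i _ => rfl)
  rw [e1, ← dsum_eq n l l' h.1 h'.1]
  exact hadj.2

lemma vtx_inj {a n : ℕ} {l l' : List ℕ} (h : GoodL a n l) (h' : GoodL a n l')
    (he : vtx a n l h = vtx a n l' h') : l = l' := by
  apply List.ext_getElem (by rw [h.1, h'.1])
  intro i hi hi'
  have h1 := congrArg Subtype.val he
  have h2 := congrFun h1 ⟨i, by rw [← h.1]; exact hi⟩
  exact congrArg Fin.val h2

lemma vtx_surj {a n : ℕ} (v : MetallicVertex a n) :
    ∃ l, ∃ h : GoodL a n l, vtx a n l h = v := by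
  have hG : GoodL a n (List.ofFn (fun i => (v.1 i : ℕ))) := by
    refine ⟨by simp, ?_, ?_⟩
    · intro x hx
      rw [List.mem_ofFn] at hx
      obtain ⟨i, rfl⟩ := hx
      exact Fin.is_le _
    · intro i hi hia
      have hin : i < n := by simpa using hi
      rw [List.getElem_ofFn] at hia
      obtain ⟨j, hji, hj0⟩ := v.2 ⟨i, by simpa using hin⟩ hia
      refine ⟨(j : ℕ), by simp, by simpa using hji, ?_⟩
      rw [List.getElem_ofFn]
      simpa using hj0
  refine ⟨_, hG, ?_⟩
  apply Subtype.ext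
  funext i
  apply Fin.ext
  show (List.ofFn (fun i => (v.1 i : ℕ)))[(i : ℕ)]'_ = _
  rw [List.getElem_ofFn]

open scoped Classical in
noncomputable def vtxT (a n : ℕ) (ha : 1 ≤ a) (l : List ℕ) : MetallicVertex a n :=
  if h : GoodL a n l then vtx a n l h else
    ⟨fun _ => ⟨0, by omega⟩, by
      intro i hi
      simp only at hi
      exact absurd hi (by omega)⟩

lemma vtxT_good {a n : ℕ} (ha : 1 ≤ a) {l : List ℕ} (h : GoodL a n l) :
    vtxT a n ha l = vtx a n l h := by
  unfold vtxT
  rw [dif_pos h]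

/-! ### building the walk -/

def walkOfChain {V : Type*} (G : SimpleGraph V) (u : V) :
    (l : List V) → List.Chain G.Adj u l → Σ v : V, G.Walk u v
  | [], _ => ⟨u, SimpleGraph.Walk.nil⟩
  | x :: xs, h =>
    let r := walkOfChain G x xs ((List.chain_cons.mp h).2)
    ⟨r.1, SimpleGraph.Walk.cons ((List.chain_cons.mp h).1) r.2⟩

lemma walkOfChain_support {V : Type*} (G : SimpleGraph V) :
    ∀ (l : List V) (u : V) (h : List.Chain G.Adj u l),
      (walkOfChain G u l h).2.support = u :: l := by
  intro l
  induction l with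
  | nil => intro u h; rfl
  | cons x xs ih =>
    intro u h
    show (SimpleGraph.Walk.cons _ _).support = _
    exact congrArg (List.cons u) (ih x _)

end MetallicHam

/-- every metallic cube `Π^a_n` (`a ≥ 1`, `n ≥ 1`) contains a
Hamiltonian path, i.e. a walk visiting every vertex exactly once. -/
theorem metallic_hamiltonian_path (a n : ℕ) (ha : 1 ≤ a) (hn : 1 ≤ n) :
    ∃ (u v : MetallicVertex a n) (p : (metallicCube a n).Walk u v),
      p.IsHamiltonian := by
  classical
  open MetallicHam in
  obtain ⟨⟨hch, hnd, hmem, hne⟩, -⟩ := MetallicHam.PH_all (a := a) ha n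
  set L := MetallicHam.Hme a n with hL
  set f := MetallicHam.vtxT a n ha with hf
  set LV := L.map f with hLVdef
  have hLVch : LV.Chain' (metallicCube a n).Adj := by
    refine MetallicHam.chain'_map_mem f L hch ?_
    intro x hx y hy hr
    have hGx := (hmem x).mp hx
    have hGy := (hmem y).mp hy
    rw [hf, MetallicHam.vtxT_good ha hGx, MetallicHam.vtxT_good ha hGy]
    exact MetallicHam.vtx_adj hGx hGy hr
  have hLVnd : LV.Nodup := by
    refine List.Nodup.map_on ?_ hnd
    intro x hx y hy hfe
    have hGx := (hmem x).mp hx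
    have hGy := (hmem y).mp hy
    rw [hf, MetallicHam.vtxT_good ha hGx, MetallicHam.vtxT_good ha hGy] at hfe
    exact MetallicHam.vtx_inj hGx hGy hfe
  have hLVmem : ∀ v : MetallicVertex a n, v ∈ LV := by
    intro v
    obtain ⟨l, hG, hvl⟩ := MetallicHam.vtx_surj v
    have hlL : l ∈ L := (hmem l).mpr hG
    refine List.mem_map.mpr ⟨l, hlL, ?_⟩
    rw [hf, MetallicHam.vtxT_good ha hG]
    exact hvl
  have hLVne : LV ≠ [] := by
    intro hh
    rw [hLVdef] at hh
    exact hne (List.map_eq_nil_iff.mp hh)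
  obtain ⟨v0, tl, hLV⟩ := List.exists_cons_of_ne_nil hLVne
  have hchain : List.Chain (metallicCube a n).Adj v0 tl := by
    rw [hLV] at hLVch
    exact hLVch
  refine ⟨v0, (MetallicHam.walkOfChain (metallicCube a n) v0 tl hchain).1,
    (MetallicHam.walkOfChain (metallicCube a n) v0 tl hchain).2, ?_⟩
  intro v
  rw [MetallicHam.walkOfChain_support, ← hLV]
  convert List.count_eq_one_of_mem hLVnd (hLVmem v)
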